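/- Let Γ be a rooted digraph satisfying P0, P1 and P2. Then Γ satisfies P3 if and only if there exist vertices x, y ∈ Γ such that desc(x) ∩ desc(y) = ∅. -/

import Mathlib

variable {V : Type*}

/-- Directed walks of length `n` (`n`-arcs). -/
def arcOf (E : V → V → Prop) : ℕ → V → V → Prop
  | 0 => fun x y => x = y
  | n + 1 => fun x y => ∃ z, E x z ∧ arcOf E n z y

/-- Vertices reachable from `x` by a directed path of length exactly `n`. -/
def descN (E : V → V → Prop) (n : ℕ) (x : V) : Set V := {y | arcOf E n x y}

/-- The descendant set of `x` (including `x` itself). -/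
def desc (E : V → V → Prop) (x : V) : Set V := {y | ∃ n, arcOf E n x y}

theorem self_mem_desc (E : V → V → Prop) (x : V) : x ∈ desc E x := ⟨0, by simp [arcOf]⟩

def descSet (E : V → V → Prop) (S : Set V) : Set V := ⋃ x ∈ S, desc E x

theorem self_mem_descSet (E : V → V → Prop) {S : Set V} {x : V} (hx : x ∈ S) :
    x ∈ descSet E S := Set.mem_biUnion hx (self_mem_desc E x)

def outSet (E : V → V → Prop) (x : V) : Set V := {y | E x y}

def inSet (E : V → V → Prop) (x : V) : Set V := {y | E y x}

def IsAut (E : V → V → Prop) (g : Equiv.Perm V) : Prop := ∀ x y, E x y ↔ E (g x) (g y)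

def Rooted (E : V → V → Prop) (α : V) : Prop := ∀ y, y ∈ desc E α

def P0 (E : V → V → Prop) (α : V) (m : ℕ) : Prop :=
  0 < m ∧ (∀ x, (outSet E x).Finite ∧ (outSet E x).ncard = m) ∧
    ∀ s t : ℕ, s ≠ t → Disjoint (descN E s α) (descN E t α)

def P1 (E : V → V → Prop) : Prop :=
  ∀ u : V, ∃ f : desc E u ≃ V, ∀ x y : desc E u, (E x.1 y.1 ↔ E (f x) (f y))

def P2 (E : V → V → Prop) (α : V) : Prop :=
  ∀ i : ℕ, ∀ x ∈ descN E i α, ∀ y ∈ descN E i α,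
    ∃ g : Equiv.Perm V, IsAut E g ∧ g α = α ∧ g x = y

def P3 (E : V → V → Prop) (α : V) : Prop :=
  ∀ i : ℕ, (descN E i α).ncard < (descN E (i + 1) α).ncard

def EdgeTrans (E : V → V → Prop) : Prop :=
  ∀ a b c d : V, E a b → E c d → ∃ g : Equiv.Perm V, IsAut E g ∧ g a = c ∧ g b = d

def VertexTrans (E : V → V → Prop) : Prop :=
  ∀ u v : V, ∃ g : Equiv.Perm V, IsAut E g ∧ g u = v

def NoDirectedCycles (E : V → V → Prop) : Prop :=
  ∀ s : ℕ, 1 ≤ s → ∀ x : V, ¬ arcOf E s x x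

def HasPropZ {W : Type*} (E : W → W → Prop) : Prop :=
  ∃ f : W → ℤ, Function.Surjective f ∧ ∀ x y : W, E x y → f y = f x + 1

def deltaSetoid (E : V → V → Prop) (n : ℕ) : Setoid V :=
  ⟨fun u v => descN E n u = descN E n v, ⟨fun _ => rfl, Eq.symm, Eq.trans⟩⟩

def QEdge (E : V → V → Prop) (n : ℕ)
    (A B : Quotient (deltaSetoid E n)) : Prop :=
  ∃ a b : V, Quotient.mk (deltaSetoid E n) a = A ∧ Quotient.mk (deltaSetoid E n) b = B ∧ E a b

def cls (E : V → V → Prop) (n : ℕ) (v : V) : Set V := {u | descN E n u = descN E n v}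

def QEdgeSet (E : V → V → Prop) (A B : Set V) : Prop := ∃ a ∈ A, ∃ b ∈ B, E a b

def WDH (E : V → V → Prop) : Prop :=
  VertexTrans E ∧
  ∀ (X Y : Finset V) (f : descSet E (↑X : Set V) ≃ descSet E (↑Y : Set V)),
    (∀ a b : descSet E (↑X : Set V), (E a.1 b.1 ↔ E (f a).1 (f b).1)) →
    ∃ g : Equiv.Perm V, IsAut E g ∧
      ∀ (x : V) (hx : x ∈ X), g x = (f ⟨x, self_mem_descSet E (by exact_mod_cast hx)⟩).1

def EdgeT (E : V → V → Prop) := {p : V × V // E p.1 p.2}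

def reachSetoid (E : V → V → Prop) : Setoid (EdgeT E) :=
  ⟨Relation.EqvGen (fun a b => a.1.1 = b.1.1 ∨ a.1.2 = b.1.2),
    Relation.EqvGen.is_equivalence _⟩

def AlSources (E : V → V → Prop) (A : Quotient (reachSetoid E)) : Set V :=
  {v | ∃ e : EdgeT E, Quotient.mk (reachSetoid E) e = A ∧ v = e.1.1}

def AlSinks (E : V → V → Prop) (A : Quotient (reachSetoid E)) : Set V :=
  {v | ∃ e : EdgeT E, Quotient.mk (reachSetoid E) e = A ∧ v = e.1.2}

def AlEdge (E : V → V → Prop) (A B : Quotient (reachSetoid E)) : Prop :=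
  ∃ v, v ∈ AlSinks E A ∧ v ∈ AlSources E B


section Aux4

variable {E : V → V → Prop}

theorem arcOf_succ_iff {n : ℕ} {x y : V} :
    arcOf E (n+1) x y ↔ ∃ z, E x z ∧ arcOf E n z y := Iff.rfl

theorem arcOf_zero_iff {x y : V} : arcOf E 0 x y ↔ x = y := Iff.rfl

theorem arcOf_add (m n : ℕ) :
    ∀ x y : V, arcOf E (m + n) x y ↔ ∃ z, arcOf E m x z ∧ arcOf E n z y := by
  induction m with
  | zero => intro x y; simp [arcOf_zero_iff]
  | succ k ih =>
    intro x y
    have h : k + 1 + n = (k + n) + 1 := by omega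
    rw [h, arcOf_succ_iff]
    constructor
    · rintro ⟨z, hz, hr⟩
      obtain ⟨w, hw1, hw2⟩ := (ih z y).1 hr
      exact ⟨w, ⟨z, hz, hw1⟩, hw2⟩
    · rintro ⟨w, ⟨z, hz, hw1⟩, hw2⟩
      exact ⟨z, hz, (ih z y).2 ⟨w, hw1, hw2⟩⟩

theorem arcOf_one {x y : V} : arcOf E 1 x y ↔ E x y := by
  rw [arcOf_succ_iff]
  constructor
  · rintro ⟨z, hz, hr⟩; rw [arcOf_zero_iff] at hr; rwa [← hr]
  · intro h; exact ⟨y, h, rfl⟩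

theorem mem_descN {n : ℕ} {x y : V} : y ∈ descN E n x ↔ arcOf E n x y := Iff.rfl

theorem descN_zero (x : V) : descN E 0 x = {x} := by
  ext y; simp [mem_descN, arcOf_zero_iff, eq_comm]

theorem desc_trans {x y z : V} (h1 : y ∈ desc E x) (h2 : z ∈ desc E y) :
    z ∈ desc E x := by
  obtain ⟨n, hn⟩ := h1; obtain ⟨k, hk⟩ := h2
  exact ⟨n + k, (arcOf_add n k x z).2 ⟨y, hn, hk⟩⟩

theorem descN_subset_desc {n : ℕ} {x : V} : descN E n x ⊆ desc E x :=
  fun _ h => ⟨n, h⟩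

/-- The successor level as a union over out-neighbours. -/
theorem descN_succ (n : ℕ) (x : V) :
    descN E (n+1) x = ⋃ z ∈ outSet E x, descN E n z := by
  ext y
  simp only [mem_descN, arcOf_succ_iff, Set.mem_iUnion, outSet, Set.mem_setOf_eq]
  exact ⟨fun ⟨z, hz, hr⟩ => ⟨z, hz, hr⟩, fun ⟨z, hz, hr⟩ => ⟨z, hz, hr⟩⟩

/-- The successor level as a union of out-sets over the previous level. -/
theorem descN_succ' (n : ℕ) (x : V) :
    descN E (n+1) x = ⋃ z ∈ descN E n x, outSet E z := by
  ext y
  have h : (n : ℕ) + 1 = n + 1 := rfl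
  simp only [mem_descN, Set.mem_iUnion, outSet, Set.mem_setOf_eq]
  rw [show (n+1) = n + 1 from rfl, arcOf_add n 1]
  constructor
  · rintro ⟨z, hz, hr⟩; exact ⟨z, hz, arcOf_one.1 hr⟩
  · rintro ⟨z, hz, hr⟩; exact ⟨z, hz, arcOf_one.2 hr⟩

theorem descN_finite (hfin : ∀ x, (outSet E x).Finite) :
    ∀ (n : ℕ) (x : V), (descN E n x).Finite := by
  intro n
  induction n with
  | zero => intro x; rw [descN_zero]; exact Set.finite_singleton x
  | succ k ih =>
    intro x
    rw [descN_succ]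
    exact Set.Finite.biUnion (hfin x) (fun z _ => ih z)

theorem descN_nonempty (hfin : ∀ x, (outSet E x).Finite ∧ (outSet E x).ncard = m)
    (hm : 0 < m) : ∀ (n : ℕ) (x : V), (descN E n x).Nonempty := by
  intro n
  induction n with
  | zero => intro x; rw [descN_zero]; exact ⟨x, rfl⟩
  | succ k ih =>
    intro x
    have hne : (outSet E x).Nonempty := by
      rcases Set.eq_empty_or_nonempty (outSet E x) with h | h
      · exfalso; have := (hfin x).2; rw [h, Set.ncard_empty] at this; omega
      · exact h
    obtain ⟨z, hz⟩ := hne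
    obtain ⟨y, hy⟩ := ih z
    exact ⟨y, (mem_descN).2 (arcOf_succ_iff.2 ⟨z, hz, hy⟩)⟩

theorem IsAut.symmAut {g : Equiv.Perm V} (hg : IsAut E g) : IsAut E g.symm := by
  intro x y
  have := hg (g.symm x) (g.symm y)
  simpa using this.symm

theorem IsAut.arcOf_map {g : Equiv.Perm V} (hg : IsAut E g) :
    ∀ (n : ℕ) (x y : V), arcOf E n x y → arcOf E n (g x) (g y) := by
  intro n
  induction n with
  | zero => intro x y h; rw [arcOf_zero_iff] at h ⊢; rw [h]
  | succ k ih =>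
    rintro x y ⟨z, hz, hr⟩
    exact ⟨g z, (hg x z).1 hz, ih z y hr⟩

theorem desc_closed {u a b : V} (ha : a ∈ desc E u) (hab : E a b) : b ∈ desc E u :=
  desc_trans ha ⟨1, arcOf_one.2 hab⟩

/-- Transfer of arcs through a P1-isomorphism. -/
theorem transfer {u : V} (f : desc E u ≃ V)
    (hf : ∀ x y : desc E u, E x.1 y.1 ↔ E (f x) (f y)) :
    ∀ (n : ℕ) (x y : desc E u), (arcOf E n x.1 y.1 ↔ arcOf E n (f x) (f y)) := by
  intro n
  induction n with
  | zero =>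
    intro x y
    rw [arcOf_zero_iff, arcOf_zero_iff]
    constructor
    · intro h; exact congrArg f (Subtype.ext h)
    · intro h; exact congrArg Subtype.val (f.injective h)
  | succ k ih =>
    intro x y
    rw [arcOf_succ_iff, arcOf_succ_iff]
    constructor
    · rintro ⟨z, hz, hr⟩
      have hzu : z ∈ desc E u := desc_closed x.2 hz
      exact ⟨f ⟨z, hzu⟩, (hf x ⟨z, hzu⟩).1 hz, (ih ⟨z, hzu⟩ y).1 hr⟩
    · rintro ⟨z, hz, hr⟩
      refine ⟨(f.symm z).1, (hf x (f.symm z)).2 (by simpa using hz), ?_⟩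
      exact (ih (f.symm z) y).2 (by simpa using hr)

end Aux4

section Main4

variable {E : V → V → Prop} {α : V} {m : ℕ}

theorem level_unique (h0 : P0 E α m) {s t : ℕ} {x : V}
    (hs : x ∈ descN E s α) (ht : x ∈ descN E t α) : s = t := by
  by_contra hne
  exact Set.disjoint_left.1 (h0.2.2 s t hne) hs ht

theorem root_unique (h0 : P0 E α m) {β : V} {s t : ℕ}
    (h1 : arcOf E s α β) (h2 : arcOf E t β α) : β = α := by
  have hst : α ∈ descN E (s + t) α := (arcOf_add s t α α).2 ⟨β, h1, h2⟩
  have h0' : α ∈ descN E 0 α := rfl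
  have : s + t = 0 := level_unique h0 hst h0'
  have hs : s = 0 := by omega
  have ht : t = 0 := by omega
  rw [hs] at h1
  exact (arcOf_zero_iff.1 h1).symm

theorem iso_root (hroot : Rooted E α) (h0 : P0 E α m) {u : V}
    (f : desc E u ≃ V) (hf : ∀ x y : desc E u, E x.1 y.1 ↔ E (f x) (f y)) :
    f ⟨u, self_mem_desc E u⟩ = α := by
  set uS : desc E u := ⟨u, self_mem_desc E u⟩ with huS
  have hr : ∀ y : V, y ∈ desc E (f uS) := by
    intro y
    obtain ⟨n, hn⟩ : (f.symm y).1 ∈ desc E u := (f.symm y).2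
    exact ⟨n, by simpa using (transfer f hf n uS (f.symm y)).1 hn⟩
  obtain ⟨s, hs⟩ := hr α
  obtain ⟨t, ht⟩ := hroot (f uS)
  exact root_unique h0 ht hs

/-- The size lemma: every vertex has levels of the same sizes as the root. -/
theorem descN_ncard_eq (hroot : Rooted E α) (h0 : P0 E α m) (h1 : P1 E)
    (u : V) (n : ℕ) : (descN E n u).ncard = (descN E n α).ncard := by
  classical
  obtain ⟨f, hf⟩ := h1 u
  set uS : desc E u := ⟨u, self_mem_desc E u⟩ with huS
  have hfu : f uS = α := iso_root hroot h0 f hf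
  set g : V → V := fun y => if h : y ∈ desc E u then f ⟨y, h⟩ else y with hg
  have himg : g '' descN E n u = descN E n α := by
    ext z
    constructor
    · rintro ⟨y, hy, rfl⟩
      have hyd : y ∈ desc E u := descN_subset_desc hy
      have : arcOf E n (f uS) (f ⟨y, hyd⟩) := (transfer f hf n uS ⟨y, hyd⟩).1 hy
      rw [hfu] at this
      simpa [hg, dif_pos hyd, mem_descN] using this
    · intro hz
      refine ⟨(f.symm z).1, ?_, ?_⟩
      · have : arcOf E n (f uS) (f (f.symm z)) := by
          simpa [hfu] using (mem_descN.1 hz)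
        exact (transfer f hf n uS (f.symm z)).2 this
      · have hd : (f.symm z).1 ∈ desc E u := (f.symm z).2
        simp only [hg, dif_pos hd]
        have : (⟨(f.symm z).1, hd⟩ : desc E u) = f.symm z := Subtype.ext rfl
        rw [this]; simp
  have hinj : Set.InjOn g (descN E n u) := by
    intro a ha b hb hab
    have had : a ∈ desc E u := descN_subset_desc ha
    have hbd : b ∈ desc E u := descN_subset_desc hb
    simp only [hg, dif_pos had, dif_pos hbd] at hab
    exact congrArg Subtype.val (f.injective hab)
  rw [← himg, Set.ncard_image_of_injOn hinj]

end Main4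

/-- P3 holds iff two vertices have disjoint descendant sets. -/
theorem P3_iff_disjoint_descendants (E : V → V → Prop) (α : V) (m : ℕ)
    (hroot : Rooted E α) (h0 : P0 E α m) (h1 : P1 E) (h2 : P2 E α) :
    P3 E α ↔ ∃ x y : V, Disjoint (desc E x) (desc E y) := by
  classical
  have hfin : ∀ x, (outSet E x).Finite := fun x => (h0.2.1 x).1
  have hm : 0 < m := h0.1
  have hne : ∀ (n : ℕ) (x : V), (descN E n x).Nonempty := descN_nonempty h0.2.1 hm
  have hsz := descN_ncard_eq hroot h0 h1
  constructor
  · -- P3 → ∃ disjoint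
    intro hP3
    by_contra hnex
    push_neg at hnex
    have meet : ∀ x y : V, ∃ z, z ∈ desc E x ∧ z ∈ desc E y := by
      intro x y
      rcases Set.not_disjoint_iff.1 (hnex x y) with ⟨z, hz1, hz2⟩
      exact ⟨z, hz1, hz2⟩
    have common : ∀ S : Finset V, ∃ w, ∀ u ∈ S, w ∈ desc E u := by
      intro S
      induction S using Finset.induction_on with
      | empty => exact ⟨α, by simp⟩
      | @insert v S' hv ih =>
        obtain ⟨w, hw⟩ := ih
        obtain ⟨z, hz1, hz2⟩ := meet w v
        refine ⟨z, ?_⟩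
        intro u hu
        rcases Finset.mem_insert.1 hu with rfl | hu'
        · exact hz2
        · exact desc_trans (hw u hu') hz1
    obtain ⟨w, hw⟩ := common (hfin α).toFinset
    have hw' : ∀ u ∈ outSet E α, w ∈ desc E u := by
      intro u hu; exact hw u ((hfin α).mem_toFinset.2 hu)
    have hone : (outSet E α).Nonempty := by
      rcases Set.eq_empty_or_nonempty (outSet E α) with h | h
      · exfalso; have h2' := (h0.2.1 α).2; rw [h, Set.ncard_empty] at h2'; omega
      · exact h
    obtain ⟨u₀, hu₀⟩ := hone
    obtain ⟨n₀, hn₀⟩ := hw' u₀ hu₀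
    have hwlev : w ∈ descN E (n₀+1) α := arcOf_succ_iff.2 ⟨u₀, hu₀, hn₀⟩
    have claim1 : ∀ u ∈ outSet E α, arcOf E n₀ u w := by
      intro u hu
      obtain ⟨n, hn⟩ := hw' u hu
      have h1' : w ∈ descN E (n+1) α := arcOf_succ_iff.2 ⟨u, hu, hn⟩
      have heq : n + 1 = n₀ + 1 := level_unique h0 h1' hwlev
      have heq' : n = n₀ := by omega
      rwa [heq'] at hn
    have claim2 : descN E (n₀+1) α ⊆ descN E n₀ u₀ := by
      intro x hx
      obtain ⟨g, hgaut, hgα, hgw⟩ := h2 (n₀+1) w hwlev x hx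
      set u'' := g.symm u₀ with hu''
      have hu''mem : u'' ∈ outSet E α := by
        have h1' : E (g.symm α) (g.symm u₀) := (hgaut.symmAut α u₀).1 hu₀
        have h2' : g.symm α = α := (Equiv.symm_apply_eq g).2 hgα.symm
        rwa [h2'] at h1'
      have harc : arcOf E n₀ u'' w := claim1 u'' hu''mem
      have hmap := hgaut.arcOf_map n₀ u'' w harc
      rw [hgw] at hmap
      simpa [hu'', mem_descN] using hmap
    have hle : (descN E (n₀+1) α).ncard ≤ (descN E n₀ α).ncard := by
      calc (descN E (n₀+1) α).ncard ≤ (descN E n₀ u₀).ncard :=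
            Set.ncard_le_ncard claim2 (descN_finite hfin n₀ u₀)
        _ = (descN E n₀ α).ncard := hsz u₀ n₀
    exact absurd (hP3 n₀) (by omega)
  · rintro ⟨x, y, hdisj⟩
    intro i
    by_contra hlt
    push_neg at hlt
    have stepA : ∀ w u : V, E w u → descN E i u = descN E (i+1) w := by
      intro w u hE
      have hsub : descN E i u ⊆ descN E (i+1) w := fun z hz => arcOf_succ_iff.2 ⟨u, hE, hz⟩
      refine Set.eq_of_subset_of_ncard_le hsub ?_ ?_
      · rw [hsz w (i+1), hsz u i]; exact hlt
      · exact descN_finite hfin (i+1) w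
    have stepA' : ∀ w w' : V, descN E i w = descN E i w' →
        descN E (i+1) w = descN E (i+1) w' := by
      intro w w' h
      rw [descN_succ' i w, descN_succ' i w', h]
    have stepB : ∀ s : ℕ, ∀ x' ∈ descN E s α, descN E i x' = descN E (s+i) α := by
      intro s
      induction s with
      | zero =>
        intro x' hx'
        rw [descN_zero, Set.mem_singleton_iff] at hx'
        subst hx'
        rw [Nat.zero_add]
      | succ k ih =>
        intro x' hx'
        obtain ⟨w, hw, hwx⟩ := (arcOf_add k 1 α x').1 (mem_descN.1 hx')
        have hE : E w x' := arcOf_one.1 hwx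
        rw [stepA w x' hE]
        have key : descN E (k + (i+1)) α = descN E (i+1) w := by
          ext z
          rw [mem_descN, arcOf_add k (i+1)]
          constructor
          · rintro ⟨w', hw', hz⟩
            have h1' : descN E (i+1) w' = descN E (i+1) w :=
              stepA' w' w (by rw [ih w' hw', ih w hw])
            rw [← h1']; exact hz
          · intro hz; exact ⟨w, hw, hz⟩
        have harith : k + 1 + i = k + (i+1) := by omega
        rw [harith, key]
    have main : ∀ p q : ℕ, ∀ a b : V, p ≤ q → arcOf E p α a → arcOf E q α b →
        ¬ Disjoint (desc E a) (desc E b) := by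
      intro p q a b hpq hpa hqb
      obtain ⟨a', ha'⟩ := hne (q - p) a
      have ha'q : a' ∈ descN E q α := by
        have h' := (arcOf_add p (q-p) α a').2 ⟨a, hpa, ha'⟩
        rwa [show p + (q - p) = q by omega] at h'
      have h1' : descN E i a' = descN E i b := by
        rw [stepB q a' ha'q, stepB q b (mem_descN.2 hqb)]
      obtain ⟨z, hz⟩ := hne i a'
      refine Set.not_disjoint_iff.2 ⟨z, ?_, ?_⟩
      · exact desc_trans (descN_subset_desc ha') (descN_subset_desc hz)
      · rw [h1'] at hz; exact descN_subset_desc hz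
    obtain ⟨p, hp⟩ := hroot x
    obtain ⟨q, hq⟩ := hroot y
    rcases le_total p q with h | h
    · exact main p q x y h hp hq hdisj
    · exact main q p y x h hq hp hdisj.symm
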